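/- Under the stated assumptions, for each fixed τ ∈ ℝ the solutions r_{n,τ} of r g_n'(r) = 2τ satisfy r_{n,τ} = 1 − (ρ²/(4n))(1 − 2τ) + o(n^{−1}) as n → ∞; equivalently, lim_{n→∞} n·(r_{n,τ} − 1) = (ρ²/4)(2τ − 1). -/

import Mathlib

open Filter MeasureTheory Real

noncomputable section

lemma reg3 {f : ℝ → ℝ} (hf : ContDiffOn ℝ 3 f (Set.Ioi (0:ℝ))) :
    (∀ x : ℝ, 0 < x → HasDerivAt f (deriv f x) x) ∧
    (∀ x : ℝ, 0 < x → HasDerivAt (deriv f) (deriv (deriv f) x) x) ∧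
    (∀ x : ℝ, 0 < x → HasDerivAt (deriv (deriv f)) (deriv (deriv (deriv f)) x) x) := by
  have h3 : ContDiffOn ℝ (2+1 : ℕ) f (Set.Ioi (0:ℝ)) := by exact_mod_cast hf
  have h2 : ContDiffOn ℝ 2 (deriv f) (Set.Ioi (0:ℝ)) :=
    ((contDiffOn_succ_iff_deriv_of_isOpen isOpen_Ioi).1 h3).2.2
  have h2' : ContDiffOn ℝ (1+1 : ℕ) (deriv f) (Set.Ioi (0:ℝ)) := by exact_mod_cast h2
  have h1 : ContDiffOn ℝ 1 (deriv (deriv f)) (Set.Ioi (0:ℝ)) :=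
    ((contDiffOn_succ_iff_deriv_of_isOpen isOpen_Ioi).1 h2').2.2
  refine ⟨fun x hx => ?_, fun x hx => ?_, fun x hx => ?_⟩
  · exact ((hf.differentiableOn (by norm_num)).differentiableAt (Ioi_mem_nhds hx)).hasDerivAt
  · exact ((h2.differentiableOn (by norm_num)).differentiableAt (Ioi_mem_nhds hx)).hasDerivAt
  · exact ((h1.differentiableOn (by norm_num)).differentiableAt (Ioi_mem_nhds hx)).hasDerivAt

/-- The quarter-Laplacian `ΔQ_n(1) = (g_n''(1) + 1)/4` of the radial potential `Q_n(ζ) = g_n(|ζ|)`,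
using that `g_n'(1) = 1`. -/
def lapQ (g : ℕ → ℝ → ℝ) (n : ℕ) : ℝ := (deriv (deriv (g n)) 1 + 1) / 4

set_option maxHeartbeats 1600000 in
/-- **Lemma 2.1 (asymptotics of `r_{n,τ}`).**
Under the standing assumptions on the family of radially symmetric potentials
`Q_n(ζ) = g_n(|ζ|)`, for each fixed `τ ∈ ℝ` the solutions `r_{n,τ}` of `r gₙ'(r) = 2τ`
(which tend to `1`) satisfy `r_{n,τ} = 1 - (ρ²/(4n))(1 - 2τ) + o(n⁻¹)`, i.e.
`n (r_{n,τ} - 1) → (ρ²/4)(2τ - 1)` as `n → ∞`. -/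
theorem r_tau_asymptotics
    (g : ℕ → ℝ → ℝ) (ρ C : ℝ) (r : ℕ → ℝ → ℝ) (τ : ℝ)
    (hg_smooth : ∀ n, ContDiffOn ℝ 3 (g n) (Set.Ioi (0:ℝ)))
    (hg1 : ∀ n, g n 1 = 0)
    (hg'1 : ∀ n, deriv (g n) 1 = 1)
    (hsub : ∀ n, ∀ x : ℝ, 0 < x → 0 ≤ deriv (deriv (g n)) x + deriv (g n) x / x)
    (hstrict : ∃ ε > (0:ℝ), ∃ δ > (0:ℝ), ∀ n : ℕ, ∀ x ∈ Set.Ioo (1-ε) (1+ε),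
        δ * n ≤ (deriv (deriv (g n)) x + deriv (g n) x / x) / 4)
    (hthird : ∃ ε > (0:ℝ), ∀ n : ℕ, ∀ x ∈ Set.Ioo (1-ε) (1+ε),
        |deriv (deriv (deriv (g n))) x| ≤ C * n)
    (hρ : 0 < ρ)
    (hρlim : Tendsto (fun n : ℕ => Real.sqrt (n / lapQ g n)) atTop (nhds ρ))
    (hr_eq : ∀ σ : ℝ, ∀ᶠ n in atTop, r n σ * deriv (g n) (r n σ) = 2 * σ)
    (hr_lim : ∀ σ : ℝ, Tendsto (fun n => r n σ) atTop (nhds 1)) :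
    Tendsto (fun n : ℕ => (n : ℝ) * (r n τ - 1)) atTop (nhds (ρ^2 / 4 * (2*τ - 1))) := by
  obtain ⟨ε₁, hε₁, δ, hδ, hstrict⟩ := hstrict
  obtain ⟨ε₂, hε₂, hthird⟩ := hthird
  set ε : ℝ := min (min ε₁ ε₂) (1/2) with hεdef
  have hε : 0 < ε := lt_min (lt_min hε₁ hε₂) (by norm_num)
  have hεle : ε ≤ 1/2 := min_le_right _ _
  have hεle₁ : ε ≤ ε₁ := le_trans (min_le_left _ _) (min_le_left _ _)
  have hεle₂ : ε ≤ ε₂ := le_trans (min_le_left _ _) (min_le_right _ _)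
  have hIsub₁ : Set.Ioo (1-ε) (1+ε) ⊆ Set.Ioo (1-ε₁) (1+ε₁) :=
    Set.Ioo_subset_Ioo (by linarith) (by linarith)
  have hIsub₂ : Set.Ioo (1-ε) (1+ε) ⊆ Set.Ioo (1-ε₂) (1+ε₂) :=
    Set.Ioo_subset_Ioo (by linarith) (by linarith)
  have hIpos : ∀ x ∈ Set.Ioo (1-ε) (1+ε), (1/2:ℝ) < x := fun x hx => by
    have := hx.1; linarith
  -- regularity
  have hD2 : ∀ n, ∀ x : ℝ, 0 < x → HasDerivAt (deriv (g n)) (deriv (deriv (g n)) x) x :=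
    fun n => (reg3 (hg_smooth n)).2.1
  have hD3 : ∀ n, ∀ x : ℝ, 0 < x →
      HasDerivAt (deriv (deriv (g n))) (deriv (deriv (deriv (g n))) x) x :=
    fun n => (reg3 (hg_smooth n)).2.2
  have hDF : ∀ n, ∀ x : ℝ, 0 < x → HasDerivAt (fun y => y * deriv (g n) y)
      (deriv (g n) x + x * deriv (deriv (g n)) x) x := by
    intro n x hx
    have h := (hasDerivAt_id x).mul (hD2 n x hx)
    simpa [one_mul, Pi.mul_def] using h
  -- C is nonnegative
  have hC : 0 ≤ C := by
    have h := hthird 1 1 ⟨by linarith, by linarith⟩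
    have h0 := abs_nonneg (deriv (deriv (deriv (g 1))) 1)
    push_cast at h
    linarith
  -- lower bound for the derivative of x * g' x on the interval
  have hf'lb : ∀ n : ℕ, ∀ x ∈ Set.Ioo (1-ε) (1+ε),
      2 * (δ * n) ≤ deriv (g n) x + x * deriv (deriv (g n)) x := by
    intro n x hx
    have h := hstrict n x (hIsub₁ hx)
    have hx2 : (1/2:ℝ) < x := hIpos x hx
    have hx0 : x ≠ 0 := by linarith
    have hid : deriv (g n) x + x * deriv (deriv (g n)) x
        = x * (deriv (deriv (g n)) x + deriv (g n) x / x) := by field_simp; ring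
    rw [hid]
    have hδn : (0:ℝ) ≤ δ * n := by positivity
    have hA : 4*(δ*n) ≤ deriv (deriv (g n)) x + deriv (g n) x / x := by linarith
    nlinarith [mul_nonneg (show (0:ℝ) ≤ x - 1/2 by linarith)
      (show (0:ℝ) ≤ deriv (deriv (g n)) x + deriv (g n) x / x by linarith)]
  -- lapQ lower bound
  have hlap : ∀ n : ℕ, δ * n ≤ lapQ g n := by
    intro n
    have h := hstrict n 1 ⟨by linarith, by linarith⟩
    rw [hg'1 n] at h
    simpa [lapQ] using h
  -- n / lapQ → ρ²
  have hρ2 : Tendsto (fun n : ℕ => (n:ℝ) / lapQ g n) atTop (nhds (ρ^2)) := by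
    refine (hρlim.pow 2).congr' ?_
    filter_upwards [eventually_ge_atTop 1] with n hn
    have hn' : (1:ℝ) ≤ n := by exact_mod_cast hn
    have hl : 0 < lapQ g n := lt_of_lt_of_le (by nlinarith) (hlap n)
    exact Real.sq_sqrt (by positivity)
  have hlapdiv : Tendsto (fun n : ℕ => lapQ g n / n) atTop (nhds ((ρ^2)⁻¹)) := by
    have h := hρ2.inv₀ (by positivity)
    refine h.congr (fun n => ?_)
    rw [inv_div]
  have he : Tendsto (fun n : ℕ => deriv (deriv (g n)) 1 / n) atTop (nhds (4/ρ^2)) := by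
    have h1 : ∀ n : ℕ, deriv (deriv (g n)) 1 / (n:ℝ) = 4 * (lapQ g n / n) - 1 / n := by
      intro n
      have h2 : deriv (deriv (g n)) 1 = 4 * lapQ g n - 1 := by unfold lapQ; ring
      rw [h2, sub_div, mul_div_assoc]
    have h3 : Tendsto (fun n : ℕ => 4 * (lapQ g n / n) - 1 / n) atTop
        (nhds (4 * (ρ^2)⁻¹ - 0)) :=
      (hlapdiv.const_mul 4).sub tendsto_one_div_atTop_nhds_zero_nat
    have h4 : (4:ℝ) * (ρ^2)⁻¹ - 0 = 4 / ρ^2 := by ring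
    rw [h4] at h3
    exact h3.congr (fun n => (h1 n).symm)
  -- constants
  set K : ℝ := |2*τ-1| / (2*δ) with hKdef
  have hK : 0 ≤ K := by positivity
  set D : ℝ := 4/ρ^2 + 1 with hDdef
  have hD : 0 < D := by positivity
  set E : ℝ := 1 + 2*(D*K) + 2*(C*K^2) + C*K with hEdef
  have hE : 0 ≤ E := by positivity
  -- eventual facts
  have Ev2 : ∀ᶠ n in atTop, r n τ ∈ Set.Ioo (1-ε) (1+ε) :=
    (hr_lim τ).eventually (Ioo_mem_nhds (by linarith) (by linarith))
  have Ev3 : ∀ᶠ n : ℕ in atTop, (1:ℝ) ≤ n := by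
    filter_upwards [eventually_ge_atTop 1] with n hn
    exact_mod_cast hn
  have Ev4 : ∀ᶠ n : ℕ in atTop, deriv (deriv (g n)) 1 / (n:ℝ) < D :=
    he.eventually_lt_const (by rw [hDdef]; linarith [div_pos (by norm_num : (0:ℝ) < 4) (pow_pos hρ 2)])
  have Ev5 : ∀ᶠ n : ℕ in atTop, 0 < deriv (deriv (g n)) 1 / (n:ℝ) :=
    he.eventually_const_lt (by positivity)
  have Ev6 : ∀ᶠ n : ℕ in atTop, K / (n:ℝ) < ε := by
    have h := tendsto_const_div_atTop_nhds_zero_nat K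
    exact h.eventually_lt_const hε
  -- main quantitative estimate
  have key : ∀ᶠ n : ℕ in atTop,
      |(2*τ - 1) - deriv (deriv (g n)) 1 * (r n τ - 1)| ≤ E * K / n := by
    filter_upwards [hr_eq τ, Ev2, Ev3, Ev4, Ev5, Ev6] with n heq hrI hn1 hG2D hG2pos hKε
    have hn0 : (0:ℝ) < n := by linarith
    have hG2D' : deriv (deriv (g n)) 1 ≤ D * n := by
      have h := (div_le_iff₀ hn0).1 hG2D.le
      linarith
    have hG2pos' : 0 ≤ deriv (deriv (g n)) 1 := by
      have h := mul_nonneg hG2pos.le hn0.le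
      rwa [div_mul_cancel₀ _ (ne_of_gt hn0)] at h
    have hEKn : 0 ≤ E * K / n := by positivity
    by_cases hR1 : r n τ = 1
    · have h2τ : (2:ℝ)*τ = 1 := by
        rw [hR1] at heq
        rw [hg'1 n] at heq
        linarith
      rw [hR1]
      simpa [h2τ] using hEKn
    -- MVT
    have hR0 : (0:ℝ) < r n τ := by have := hrI.1; linarith
    obtain ⟨c, hcR, hcI, hceq⟩ : ∃ c, |c - 1| ≤ |r n τ - 1| ∧ c ∈ Set.Ioo (1-ε) (1+ε) ∧
        deriv (g n) c + c * deriv (deriv (g n)) c = (2*τ - 1) / (r n τ - 1) := by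
      rcases lt_or_gt_of_ne hR1 with hlt | hgt
      · obtain ⟨c, hc, hceq⟩ := exists_hasDerivAt_eq_slope (fun y => y * deriv (g n) y)
          (fun y => deriv (g n) y + y * deriv (deriv (g n)) y) hlt
          (fun x hx => (hDF n x (lt_of_lt_of_le hR0 hx.1)).continuousAt.continuousWithinAt)
          (fun x hx => hDF n x (lt_of_lt_of_le hR0 (le_of_lt hx.1)))
        refine ⟨c, ?_, ⟨by linarith [hc.1, hrI.1], by linarith [hc.2]⟩, ?_⟩
        · rw [abs_of_nonpos (by linarith [hc.2]), abs_of_nonpos (by linarith)]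
          linarith [hc.1]
        · rw [eq_div_iff (sub_ne_zero.2 hR1)]
          rw [heq] at hceq
          simp only [one_mul, hg'1 n] at hceq
          have h2 : (deriv (g n) c + c * deriv (deriv (g n)) c) * (1 - r n τ) = 1 - 2*τ := by
            rw [hceq]
            exact div_mul_cancel₀ _ (sub_ne_zero.2 (Ne.symm hR1))
          linear_combination -h2
      · obtain ⟨c, hc, hceq⟩ := exists_hasDerivAt_eq_slope (fun y => y * deriv (g n) y)
          (fun y => deriv (g n) y + y * deriv (deriv (g n)) y) hgt
          (fun x hx => (hDF n x (lt_of_lt_of_le (by norm_num) hx.1)).continuousAt.continuousWithinAt)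
          (fun x hx => hDF n x (lt_of_lt_of_le (by norm_num) (le_of_lt hx.1)))
        refine ⟨c, ?_, ⟨by linarith [hc.1], by linarith [hc.2, hrI.2]⟩, ?_⟩
        · rw [abs_of_nonneg (by linarith [hc.1]), abs_of_nonneg (by linarith)]
          linarith [hc.2]
        · rw [eq_div_iff (sub_ne_zero.2 hR1)]
          rw [heq] at hceq
          simp only [one_mul, hg'1 n] at hceq
          have h2 : (deriv (g n) c + c * deriv (deriv (g n)) c) * (r n τ - 1) = 2*τ - 1 := by
            rw [hceq]
            exact div_mul_cancel₀ _ (sub_ne_zero.2 hR1)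
          linear_combination h2
    have hc0 : (0:ℝ) < c := by have := hcI.1; linarith
    have hlb : 2*(δ*n) ≤ deriv (g n) c + c * deriv (deriv (g n)) c := hf'lb n c hcI
    have hδn : (0:ℝ) < 2*(δ*n) := by positivity
    have hF'pos : 0 < deriv (g n) c + c * deriv (deriv (g n)) c := lt_of_lt_of_le hδn hlb
    have heq2 : 2*τ - 1 = (deriv (g n) c + c * deriv (deriv (g n)) c) * (r n τ - 1) := by
      rw [hceq]
      exact (div_mul_cancel₀ _ (sub_ne_zero.2 hR1)).symm
    -- bound |r - 1| ≤ K / n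
    have hRb : |r n τ - 1| ≤ K / n := by
      have h1 : |2*τ-1| = (deriv (g n) c + c * deriv (deriv (g n)) c) * |r n τ - 1| := by
        rw [heq2, abs_mul, abs_of_pos hF'pos]
      rw [le_div_iff₀ hn0, hKdef, le_div_iff₀ (by positivity : (0:ℝ) < 2*δ)]
      have h2 : 2*(δ*n) * |r n τ - 1| ≤ (deriv (g n) c + c * deriv (deriv (g n)) c) * |r n τ - 1| :=
        mul_le_mul_of_nonneg_right hlb (abs_nonneg _)
      calc |r n τ - 1| * n * (2*δ) = 2*(δ*n) * |r n τ - 1| := by ring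
        _ ≤ (deriv (g n) c + c * deriv (deriv (g n)) c) * |r n τ - 1| := h2
        _ = |2*τ-1| := h1.symm
    have hcb : |c - 1| ≤ K / n := le_trans hcR hRb
    -- the interval J
    have h1J : (1:ℝ) ∈ Set.Icc (1 - K/n) (1 + K/n) := by
      constructor <;> [linarith [div_nonneg hK hn0.le]; linarith [div_nonneg hK hn0.le]]
    have hcJ : c ∈ Set.Icc (1 - K/n) (1 + K/n) := by
      rw [abs_le] at hcb
      exact ⟨by linarith [hcb.1], by linarith [hcb.2]⟩
    have hJI : Set.Icc (1 - K/n) (1 + K/n) ⊆ Set.Ioo (1-ε) (1+ε) := fun x hx =>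
      ⟨by linarith [hx.1], by linarith [hx.2]⟩
    have hJpos : ∀ x ∈ Set.Icc (1 - K/n) (1 + K/n), (0:ℝ) < x := fun x hx => by
      have := (hJI hx).1; linarith
    have hxKn : ∀ x ∈ Set.Icc (1 - K/n) (1 + K/n), |x - 1| ≤ K/n := fun x hx => by
      rw [abs_le]; exact ⟨by linarith [hx.1], by linarith [hx.2]⟩
    -- second derivative bounds on J
    have hg2b : ∀ x ∈ Set.Icc (1 - K/n) (1 + K/n),
        |deriv (deriv (g n)) x - deriv (deriv (g n)) 1| ≤ C * K := by
      intro x hx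
      have hmvt := Convex.norm_image_sub_le_of_norm_hasDerivWithin_le
        (f := deriv (deriv (g n))) (f' := deriv (deriv (deriv (g n))))
        (s := Set.Icc (1 - K/n) (1 + K/n)) (C := C*n)
        (fun y hy => (hD3 n y (hJpos y hy)).hasDerivWithinAt)
        (fun y hy => by
          simpa [Real.norm_eq_abs] using hthird n y (hIsub₂ (hJI hy)))
        (convex_Icc _ _) h1J hx
      rw [Real.norm_eq_abs, Real.norm_eq_abs] at hmvt
      calc |deriv (deriv (g n)) x - deriv (deriv (g n)) 1| ≤ C*n*|x - 1| := hmvt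
        _ ≤ C*n*(K/n) := by
            exact mul_le_mul_of_nonneg_left (hxKn x hx) (by positivity)
        _ = C*K := by rw [mul_assoc, mul_comm ((n:ℝ)) (K/(n:ℝ)), div_mul_cancel₀ K (ne_of_gt hn0)]
    have hg2abs : ∀ x ∈ Set.Icc (1 - K/n) (1 + K/n),
        |deriv (deriv (g n)) x| ≤ D*n + C*K := by
      intro x hx
      have h := hg2b x hx
      have h2 : |deriv (deriv (g n)) x| ≤ |deriv (deriv (g n)) 1|
          + |deriv (deriv (g n)) x - deriv (deriv (g n)) 1| := by
        have := abs_add_le (deriv (deriv (g n)) 1) (deriv (deriv (g n)) x - deriv (deriv (g n)) 1)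
        simpa using this
      rw [abs_of_nonneg hG2pos'] at h2
      linarith
    -- first derivative bound on J
    have hg1b : ∀ x ∈ Set.Icc (1 - K/n) (1 + K/n),
        |deriv (g n) x - 1| ≤ (D*n + C*K) * (K/n) := by
      intro x hx
      have hmvt := Convex.norm_image_sub_le_of_norm_hasDerivWithin_le
        (f := deriv (g n)) (f' := deriv (deriv (g n)))
        (s := Set.Icc (1 - K/n) (1 + K/n)) (C := D*n + C*K)
        (fun y hy => (hD2 n y (hJpos y hy)).hasDerivWithinAt)
        (fun y hy => by simpa [Real.norm_eq_abs] using hg2abs y hy)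
        (convex_Icc _ _) h1J hx
      rw [Real.norm_eq_abs, Real.norm_eq_abs, hg'1 n] at hmvt
      calc |deriv (g n) x - 1| ≤ (D*n + C*K)*|x - 1| := hmvt
        _ ≤ (D*n + C*K)*(K/n) := by
            exact mul_le_mul_of_nonneg_left (hxKn x hx) (by positivity)
    have hprod : (D*n + C*K)*(K/n) ≤ D*K + C*K^2 := by
      have h1 : (D*n + C*K)*(K/n) = D*K + (C*K*K)/n := by field_simp
      have h2 : (C*K*K)/n ≤ C*K*K := by
        apply div_le_self (by positivity) hn1
      rw [h1]
      nlinarith [h2]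
    have hg1c : |deriv (g n) c| ≤ 1 + (D*K + C*K^2) := by
      have h := le_trans (hg1b c hcJ) hprod
      have h2 : |deriv (g n) c| ≤ |deriv (g n) c - 1| + 1 := by
        have := abs_add_le (deriv (g n) c - 1) 1
        simpa using this
      linarith
    have hg2c1 : |c * deriv (deriv (g n)) c - deriv (deriv (g n)) 1| ≤ D*K + C*K^2 + C*K := by
      have h1 : |c * deriv (deriv (g n)) c - deriv (deriv (g n)) 1|
          ≤ |c - 1| * |deriv (deriv (g n)) c| + |deriv (deriv (g n)) c - deriv (deriv (g n)) 1| := by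
        have h := abs_add_le ((c-1) * deriv (deriv (g n)) c)
          (deriv (deriv (g n)) c - deriv (deriv (g n)) 1)
        rw [abs_mul] at h
        calc |c * deriv (deriv (g n)) c - deriv (deriv (g n)) 1|
            = |(c-1) * deriv (deriv (g n)) c + (deriv (deriv (g n)) c - deriv (deriv (g n)) 1)| := by
              ring_nf
          _ ≤ _ := h
      have h2 : |c - 1| * |deriv (deriv (g n)) c| ≤ (K/n)*(D*n + C*K) :=
        mul_le_mul hcb (hg2abs c hcJ) (abs_nonneg _) (by positivity)
      have h3 : (K/n)*(D*n + C*K) ≤ D*K + C*K^2 := by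
        rw [mul_comm]; exact hprod
      have h4 := hg2b c hcJ
      calc |c * deriv (deriv (g n)) c - deriv (deriv (g n)) 1|
          ≤ |c - 1| * |deriv (deriv (g n)) c|
            + |deriv (deriv (g n)) c - deriv (deriv (g n)) 1| := h1
        _ ≤ (K/n)*(D*n + C*K) + C*K := add_le_add h2 h4
        _ ≤ D*K + C*K^2 + C*K := by linarith [h3]
    have hdiff : |(deriv (g n) c + c * deriv (deriv (g n)) c) - deriv (deriv (g n)) 1| ≤ E := by
      have h1 : |(deriv (g n) c + c * deriv (deriv (g n)) c) - deriv (deriv (g n)) 1|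
          ≤ |deriv (g n) c| + |c * deriv (deriv (g n)) c - deriv (deriv (g n)) 1| := by
        have h := abs_add_le (deriv (g n) c) (c * deriv (deriv (g n)) c - deriv (deriv (g n)) 1)
        calc |(deriv (g n) c + c * deriv (deriv (g n)) c) - deriv (deriv (g n)) 1|
            = |deriv (g n) c + (c * deriv (deriv (g n)) c - deriv (deriv (g n)) 1)| := by ring_nf
          _ ≤ _ := h
      have := add_le_add hg1c hg2c1
      rw [hEdef]
      linarith
    calc |(2*τ - 1) - deriv (deriv (g n)) 1 * (r n τ - 1)|
        = |(deriv (g n) c + c * deriv (deriv (g n)) c) - deriv (deriv (g n)) 1| * |r n τ - 1| := by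
          rw [heq2, ← sub_mul, abs_mul]
      _ ≤ E * (K/n) := mul_le_mul hdiff hRb (abs_nonneg _) hE
      _ = E * K / n := by ring
  -- conclusion
  have key' : ∀ᶠ n : ℕ in atTop,
      ‖(2*τ - 1) - deriv (deriv (g n)) 1 * (r n τ - 1)‖ ≤ E * K / n := by
    filter_upwards [key] with n h
    simpa [Real.norm_eq_abs] using h
  have h0 : Tendsto (fun n : ℕ => E * K / (n:ℝ)) atTop (nhds 0) :=
    tendsto_const_div_atTop_nhds_zero_nat _
  have ht : Tendsto (fun n : ℕ => (2*τ - 1) - deriv (deriv (g n)) 1 * (r n τ - 1)) atTop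
      (nhds 0) := squeeze_zero_norm' key' h0
  have hlim1 : Tendsto (fun n : ℕ => deriv (deriv (g n)) 1 * (r n τ - 1)) atTop
      (nhds (2*τ - 1)) := by
    have hconst : Tendsto (fun _ : ℕ => 2*τ-1) atTop (nhds (2*τ-1)) := tendsto_const_nhds
    have h := hconst.sub ht
    simpa using h
  have hinv : Tendsto (fun n : ℕ => (deriv (deriv (g n)) 1 / (n:ℝ))⁻¹) atTop
      (nhds ((4/ρ^2)⁻¹)) := he.inv₀ (by positivity)
  have hfin := hlim1.mul hinv
  have hEv : (fun n : ℕ => deriv (deriv (g n)) 1 * (r n τ - 1) * (deriv (deriv (g n)) 1 / (n:ℝ))⁻¹)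
      =ᶠ[atTop] (fun n : ℕ => (n:ℝ) * (r n τ - 1)) := by
    filter_upwards [he.eventually_const_lt (by positivity : (0:ℝ) < 4/ρ^2),
      eventually_gt_atTop 0] with n hpos hn
    have hn0 : (0:ℝ) < n := by exact_mod_cast hn
    have hG2pos : 0 < deriv (deriv (g n)) 1 := by
      have h := mul_pos hpos hn0
      rwa [div_mul_cancel₀ _ (ne_of_gt hn0)] at h
    rw [inv_div]
    field_simp
  have hfin2 := hfin.congr' hEv
  have hval : (2*τ - 1) * (4/ρ^2)⁻¹ = ρ^2 / 4 * (2*τ - 1) := by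
    have hρne : ρ ≠ 0 := ne_of_gt hρ
    field_simp
  rwa [hval] at hfin2
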